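/- Define \(F_i(a,b;c;x) := \sum_{k=0}^i \frac{(a)_k}{\Gamma(c+k)} L_{i-k}^{(-a-i)}(-x)\, L_k^{(b)}(x)\). Then for every nonnegative integer i and all real a, b, c, \(F_i(a,b;c;x) = \frac{1}{\Gamma(c+i)} \sum_{j=0}^i (-1)^j \binom{a-c}{j}\binom{b-c+1}{i-j}(a)_{i-j}\, x^j\). -/

import Mathlib

open Finset

/-- Rising factorial (Pochhammer symbol) `(x)_k = x(x+1)⋯(x+k-1)`. -/
noncomputable def poch (x : ℝ) (k : ℕ) : ℝ := (ascPochhammer ℝ k).eval x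

/-- Generalized binomial coefficient `C(y, m) = (y-m+1)_m / m!` for real `y`. -/
noncomputable def gbinom (y : ℝ) (m : ℕ) : ℝ := poch (y - m + 1) m / m.factorial

/-- Generalized binomial coefficient with integer lower index, zero for negative index. -/
noncomputable def gbinomZ (y : ℝ) (m : ℤ) : ℝ := if 0 ≤ m then gbinom y m.toNat else 0

/-- Generalized Laguerre polynomial `L_n^{(a)}(x)`, defined for all real `a`. -/
noncomputable def Lag (n : ℕ) (a : ℝ) (x : ℝ) : ℝ :=
  ∑ k ∈ range (n + 1),
    (-1 : ℝ) ^ k * poch (a + k + 1) (n - k) / (n - k).factorial * x ^ k / k.factorial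

lemma poch_zero (x : ℝ) : poch x 0 = 1 := by simp [poch]

lemma poch_succ_right (x : ℝ) (n : ℕ) : poch x (n+1) = poch x n * (x + n) := by
  simp [poch, ascPochhammer_succ_right]

lemma poch_succ_left (x : ℝ) (n : ℕ) : poch x (n+1) = x * poch (x+1) n := by
  simp [poch, ascPochhammer_succ_left, Polynomial.eval_comp]

lemma poch_add (x : ℝ) (m n : ℕ) : poch x (m+n) = poch x m * poch (x + m) n := by
  induction n with
  | zero => simp [poch_zero]
  | succ n ih =>
      rw [← add_assoc, poch_succ_right, ih, poch_succ_right]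
      push_cast
      ring

lemma poch_reverse (x : ℝ) (n : ℕ) : poch x n = (-1)^n * poch (-x - n + 1) n := by
  induction n generalizing x with
  | zero => simp [poch_zero]
  | succ n ih =>
      rw [poch_succ_right, ih, poch_succ_left]
      have h : -x - ↑(n+1) + 1 + 1 = -x - ↑n + 1 := by push_cast; ring
      rw [h]
      push_cast
      ring

lemma poch_reverse' (x : ℝ) (n : ℕ) : poch (-x - n + 1) n = (-1)^n * poch x n := by
  have h := poch_reverse x n
  have h2 : ((-1:ℝ)^n) * ((-1:ℝ)^n) = 1 := by
    rw [← pow_add, ← two_mul, pow_mul]; norm_num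
  calc poch (-x - n + 1) n = ((-1:ℝ)^n * (-1:ℝ)^n) * poch (-x - n + 1) n := by rw [h2, one_mul]
    _ = (-1:ℝ)^n * poch x n := by rw [mul_assoc, ← h]

lemma key (n : ℕ) : ∀ (u v : ℝ),
    ∑ k ∈ range (n+1), (-1:ℝ)^k * (n.choose k) * poch u k * poch (v + k) (n-k)
      = poch (v - u) n := by
  induction n with
  | zero => intro u v; simp [poch_zero]
  | succ n ih =>
      intro u v
      rw [Finset.sum_range_succ']
      have h1 : ∀ k ∈ range (n+1),
          (-1:ℝ)^(k+1) * (((n+1).choose (k+1) : ℕ) : ℝ) * poch u (k+1)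
              * poch (v + ((k:ℝ)+1)) (n+1-(k+1))
          = ((-1:ℝ)^(k+1) * (n.choose k) * poch u (k+1) * poch (v + ((k:ℝ)+1)) (n-k))
            + ((-1:ℝ)^(k+1) * (n.choose (k+1)) * poch u (k+1) * poch (v + ((k:ℝ)+1)) (n-k)) := by
        intro k hk
        rw [Nat.choose_succ_succ, Nat.succ_sub_succ]
        push_cast
        ring
      have hcast : ∀ k ∈ range (n+1),
          (-1:ℝ)^(k+1) * (((n+1).choose (k+1) : ℕ) : ℝ) * poch u (k+1)
              * poch (v + ((k+1 : ℕ):ℝ)) (n+1-(k+1))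
          = ((-1:ℝ)^(k+1) * (n.choose k) * poch u (k+1) * poch (v + ((k:ℝ)+1)) (n-k))
            + ((-1:ℝ)^(k+1) * (n.choose (k+1)) * poch u (k+1) * poch (v + ((k:ℝ)+1)) (n-k)) := by
        intro k hk
        have := h1 k hk
        push_cast at this ⊢
        exact this
      rw [Finset.sum_congr rfl hcast, Finset.sum_add_distrib]
      have hA : ∑ k ∈ range (n+1),
          (-1:ℝ)^(k+1) * (n.choose k) * poch u (k+1) * poch (v + ((k:ℝ)+1)) (n-k)
          = -u * poch (v - u) n := by
        have hih := ih (u+1) (v+1)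
        rw [show v - u = (v+1) - (u+1) by ring, ← hih, Finset.mul_sum]
        apply Finset.sum_congr rfl
        intro k hk
        rw [poch_succ_left u k, show v + ((k:ℝ)+1) = (v+1) + (k:ℝ) by ring]
        ring
      have hB : (∑ k ∈ range (n+1),
          (-1:ℝ)^(k+1) * (n.choose (k+1)) * poch u (k+1) * poch (v + ((k:ℝ)+1)) (n-k))
          + (-1:ℝ)^0 * (((n+1).choose 0 : ℕ) : ℝ) * poch u 0 * poch (v + ((0:ℕ):ℝ)) (n+1-0)
          = (v + n) * poch (v - u) n := by
        rw [Finset.sum_range_succ]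
        simp only [Nat.choose_succ_self, Nat.cast_zero, Nat.cast_one, Nat.choose_zero_right,
          pow_zero, one_mul, poch_zero, mul_one, add_zero, Nat.sub_zero, mul_zero, zero_mul]
        have hg := Finset.sum_range_succ' (fun k =>
          (-1:ℝ)^k * (n.choose k) * poch u k * poch (v + (k:ℝ)) (n+1-k)) n
        have hgB : ∑ k ∈ range (n+1), (-1:ℝ)^k * (n.choose k) * poch u k
            * poch (v + (k:ℝ)) (n+1-k) = (v + n) * poch (v - u) n := by
          rw [← ih u v, Finset.mul_sum]
          apply Finset.sum_congr rfl
          intro k hk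
          have hk' : k ≤ n := by simpa [Nat.lt_succ_iff] using hk
          rw [show n+1-k = (n-k)+1 by omega, poch_succ_right]
          have : v + (k:ℝ) + ((n-k : ℕ):ℝ) = v + n := by
            rw [Nat.cast_sub hk']; ring
          rw [this]
          ring
        rw [← hgB, hg]
        simp only [Nat.cast_zero, Nat.choose_zero_right, Nat.cast_one, pow_zero, one_mul,
          poch_zero, mul_one, add_zero, Nat.sub_zero]
        congr 1
        apply Finset.sum_congr rfl
        intro k hk
        rw [Nat.succ_sub_succ]
        push_cast
        ring
      rw [add_assoc, hA, hB, poch_succ_right]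
      ring

lemma key'' (j : ℕ) (u v : ℝ) :
    ∑ l ∈ range (j+1), (-1:ℝ)^l * poch u l * poch (v + l) (j - l)
        / ((j-l).factorial * l.factorial)
      = poch (v - u) j / j.factorial := by
  rw [eq_div_iff (by exact_mod_cast j.factorial_ne_zero)]
  rw [Finset.sum_mul, ← key j u v]
  apply Finset.sum_congr rfl
  intro l hl
  have hl' : l ≤ j := by simpa [Nat.lt_succ_iff] using hl
  have hfac : ((j.choose l : ℕ) : ℝ) * ((l.factorial : ℝ) * ((j-l).factorial : ℝ))
      = (j.factorial : ℝ) := by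
    exact_mod_cast congrArg (Nat.cast (R := ℝ))
      (by rw [← mul_assoc]; exact Nat.choose_mul_factorial_mul_factorial hl')
  have h1 : ((j-l).factorial : ℝ) ≠ 0 := by exact_mod_cast (j-l).factorial_ne_zero
  have h2 : (l.factorial : ℝ) ≠ 0 := by exact_mod_cast l.factorial_ne_zero
  field_simp
  linear_combination (-(poch u l * poch (v + l) (j - l))) * hfac

lemma key' (N : ℕ) (u v : ℝ) :
    ∑ s ∈ range (N+1), (-1:ℝ)^(N-s) * poch u s * poch (v + s) (N - s)
        / ((N-s).factorial * s.factorial)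
      = (-1:ℝ)^N * poch (v - u) N / N.factorial := by
  rw [mul_div_assoc, ← key'' N u v, Finset.mul_sum]
  apply Finset.sum_congr rfl
  intro s hs
  have hs' : s ≤ N := by simpa [Nat.lt_succ_iff] using hs
  have e1 : (-1:ℝ)^(N-s) * (-1)^s = (-1)^N := by
    rw [← pow_add]; congr 1; omega
  have h2 : (-1:ℝ)^s * (-1)^s = 1 := by
    rw [← pow_add, ← two_mul, pow_mul]; norm_num
  rw [← e1]
  linear_combination (-((-1:ℝ)^(N-s) * poch u s * poch (v + s) (N - s)
    / (((N-s).factorial : ℝ) * (s.factorial : ℝ)))) * h2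

lemma poch_div_gamma (y : ℝ) (n : ℕ) :
    poch y n / Real.Gamma (y + n) = 1 / Real.Gamma y := by
  induction n with
  | zero => simp [poch_zero]
  | succ n ih =>
      have hc : y + ((n+1 : ℕ) : ℝ) = (y + n) + 1 := by push_cast; ring
      rw [hc, poch_succ_right]
      by_cases h : y + (n : ℝ) = 0
      · have hy : y = -(n : ℝ) := by linarith
        rw [h, zero_add, Real.Gamma_one, hy, Real.Gamma_neg_nat_eq_zero]
        simp
      · rw [Real.Gamma_add_one h, mul_comm (y + (n:ℝ)) (Real.Gamma (y + n)),
          mul_div_mul_right _ _ h, ih]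

lemma tri1 (n : ℕ) (f : ℕ → ℕ → ℝ) :
    ∑ k ∈ range (n+1), ∑ l ∈ range (k+1), f k l
    = ∑ l ∈ range (n+1), ∑ s ∈ range (n - l + 1), f (l+s) l := by
  rw [Finset.sum_sigma', Finset.sum_sigma']
  apply Finset.sum_nbij' (fun p => (⟨p.2, p.1 - p.2⟩ : (_ : ℕ) × ℕ))
    (fun q => (⟨q.1 + q.2, q.1⟩ : (_ : ℕ) × ℕ))
  · rintro ⟨k, l⟩ hp
    simp only [Finset.mem_sigma, Finset.mem_range] at hp ⊢
    omega
  · rintro ⟨l, s⟩ hq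
    simp only [Finset.mem_sigma, Finset.mem_range] at hq ⊢
    omega
  · rintro ⟨k, l⟩ hp
    simp only [Finset.mem_sigma, Finset.mem_range] at hp
    simp only [Sigma.mk.inj_iff, heq_eq_eq, and_true, true_and]
    omega
  · rintro ⟨l, s⟩ hq
    simp only [Finset.mem_sigma, Finset.mem_range] at hq
    simp only [Sigma.mk.inj_iff, heq_eq_eq, and_true, true_and]
    omega
  · rintro ⟨k, l⟩ hp
    simp only [Finset.mem_sigma, Finset.mem_range] at hp
    have h : l + (k - l) = k := by omega
    simp only [h]

lemma tri2 (n : ℕ) (f : ℕ → ℕ → ℝ) :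
    ∑ s ∈ range (n+1), ∑ m ∈ range (n - s + 1), f s m
    = ∑ m ∈ range (n+1), ∑ s ∈ range (n - m + 1), f s m := by
  rw [Finset.sum_sigma', Finset.sum_sigma']
  apply Finset.sum_nbij' (fun p => (⟨p.2, p.1⟩ : (_ : ℕ) × ℕ))
    (fun q => (⟨q.2, q.1⟩ : (_ : ℕ) × ℕ))
  · rintro ⟨s, m⟩ hp
    simp only [Finset.mem_sigma, Finset.mem_range] at hp ⊢
    omega
  · rintro ⟨m, s⟩ hq
    simp only [Finset.mem_sigma, Finset.mem_range] at hq ⊢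
    omega
  · rintro ⟨s, m⟩ _; rfl
  · rintro ⟨m, s⟩ _; rfl
  · rintro ⟨s, m⟩ _; rfl

lemma tri3 (n : ℕ) (f : ℕ → ℕ → ℝ) :
    ∑ l ∈ range (n+1), ∑ m ∈ range (n - l + 1), f l m
    = ∑ j ∈ range (n+1), ∑ l ∈ range (j+1), f l (j-l) := by
  rw [Finset.sum_sigma', Finset.sum_sigma']
  apply Finset.sum_nbij' (fun p => (⟨p.1 + p.2, p.1⟩ : (_ : ℕ) × ℕ))
    (fun q => (⟨q.2, q.1 - q.2⟩ : (_ : ℕ) × ℕ))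
  · rintro ⟨l, m⟩ hp
    simp only [Finset.mem_sigma, Finset.mem_range] at hp ⊢
    omega
  · rintro ⟨j, l⟩ hq
    simp only [Finset.mem_sigma, Finset.mem_range] at hq ⊢
    omega
  · rintro ⟨l, m⟩ hp
    simp only [Finset.mem_sigma, Finset.mem_range] at hp
    simp only [Sigma.mk.inj_iff, heq_eq_eq, and_true, true_and]
    omega
  · rintro ⟨j, l⟩ hq
    simp only [Finset.mem_sigma, Finset.mem_range] at hq
    simp only [Sigma.mk.inj_iff, heq_eq_eq, and_true, true_and]
    omega
  · rintro ⟨l, m⟩ hp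
    simp only [Finset.mem_sigma, Finset.mem_range] at hp
    have h : l + m - l = m := by omega
    simp only [h]

lemma aux_inner_sum (a b c x : ℝ) (i j l : ℕ) (hj : j ≤ i) (hl : l ≤ j) :
    ∑ s ∈ range (i - j + 1),
        poch a (l+s) * poch (c + ((l+s : ℕ) : ℝ)) (i - l - s)
          * ((-1:ℝ)^(j-l) * poch (-a - i + ((j-l : ℕ) : ℝ) + 1) (i - l - s - (j-l))
                / (i - l - s - (j-l)).factorial
              * (-x)^(j-l) / (j-l).factorial)
          * ((-1:ℝ)^l * poch (b + l + 1) ((l+s) - l) / ((l+s) - l).factorial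
              * x^l / l.factorial)
    = (poch a (i-j) * x^j * ((-1:ℝ)^(i-j) * poch (c - b - 1) (i-j) / (i-j).factorial))
      * ((-1:ℝ)^l * poch (a + ((i-j : ℕ) : ℝ)) l * poch (c + ((i-j : ℕ) : ℝ) + l) (j-l)
          / ((j-l).factorial * l.factorial)) := by
  calc
    _ = ∑ s ∈ range (i - j + 1),
          (poch a (i-j) * x^j
            * ((-1:ℝ)^l * poch (a + ((i-j : ℕ) : ℝ)) l * poch (c + ((i-j : ℕ) : ℝ) + l) (j-l)
                / ((j-l).factorial * l.factorial)))
          * ((-1:ℝ)^(i - j - s) * poch (b + l + 1) s * poch ((c + (l:ℝ)) + s) (i - j - s)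
              / ((i - j - s).factorial * s.factorial)) := by
        apply Finset.sum_congr rfl
        intro s hs
        have hs' : s ≤ i - j := by simpa [Nat.lt_succ_iff] using hs
        have e0 : (l+s) - l = s := by omega
        have e3 : i - l - s - (j - l) = i - j - s := by omega
        rw [e0, e3]
        have hc1 : ((i - j - s : ℕ) : ℝ) = (i:ℝ) - (j:ℝ) - (s:ℝ) := by
          rw [Nat.cast_sub (show s ≤ i - j by omega), Nat.cast_sub hj]
        have hc2 : ((j - l : ℕ) : ℝ) = (j:ℝ) - (l:ℝ) := by rw [Nat.cast_sub hl]
        have hc3 : ((i - j : ℕ) : ℝ) = (i:ℝ) - (j:ℝ) := by rw [Nat.cast_sub hj]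
        have harg : -a - (i:ℝ) + ((j-l : ℕ) : ℝ) + 1
            = -(a + (l:ℝ) + (s:ℝ)) - ((i - j - s : ℕ) : ℝ) + 1 := by
          rw [hc1, hc2]; ring
        rw [harg, poch_reverse']
        have e2 : i - l - s = (i - j - s) + (j - l) := by omega
        rw [e2, poch_add (c + ((l+s : ℕ) : ℝ)) (i - j - s) (j-l)]
        have hb1 : c + ((l+s : ℕ) : ℝ) = (c + (l:ℝ)) + (s:ℝ) := by push_cast; ring
        rw [hb1]
        have hb2 : (c + (l:ℝ)) + (s:ℝ) + ((i - j - s : ℕ) : ℝ)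
            = c + ((i-j : ℕ) : ℝ) + (l:ℝ) := by
          rw [hc1, hc3]; ring
        rw [hb2]
        have E1 : poch a (l+s) * poch (a + (l:ℝ) + (s:ℝ)) (i - j - s)
            = poch a (i-j) * poch (a + ((i-j : ℕ) : ℝ)) l := by
          have h1 := poch_add a (l+s) (i - j - s)
          rw [show (l+s) + (i - j - s) = (i-j) + l from by omega] at h1
          rw [poch_add a (i-j) l] at h1
          rw [show a + ((l+s : ℕ) : ℝ) = a + (l:ℝ) + (s:ℝ) from by push_cast; ring] at h1
          exact h1.symm
        have E34 : (-1:ℝ)^(j-l) * (-x)^(j-l) * x^l = x^j := by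
          rw [← mul_pow, neg_one_mul, neg_neg, ← pow_add]
          congr 1
          omega
        linear_combination
          ((poch ((c + (l:ℝ)) + s) (i - j - s) * poch (c + ((i-j : ℕ) : ℝ) + l) (j-l)
              * (-1:ℝ)^(i - j - s) * (-1:ℝ)^l * poch (b + l + 1) s
              / (i - j - s).factorial / (j-l).factorial / s.factorial / l.factorial)
            * (poch a (l+s) * poch (a + (l:ℝ) + (s:ℝ)) (i - j - s))) * E34
          + ((poch ((c + (l:ℝ)) + s) (i - j - s) * poch (c + ((i-j : ℕ) : ℝ) + l) (j-l)
              * (-1:ℝ)^(i - j - s) * (-1:ℝ)^l * poch (b + l + 1) s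
              / (i - j - s).factorial / (j-l).factorial / s.factorial / l.factorial)
            * x^j) * E1
    _ = (poch a (i-j) * x^j
          * ((-1:ℝ)^l * poch (a + ((i-j : ℕ) : ℝ)) l * poch (c + ((i-j : ℕ) : ℝ) + l) (j-l)
              / ((j-l).factorial * l.factorial)))
        * ∑ s ∈ range (i - j + 1),
            (-1:ℝ)^(i - j - s) * poch (b + l + 1) s * poch ((c + (l:ℝ)) + s) (i - j - s)
              / ((i - j - s).factorial * s.factorial) := by
        rw [Finset.mul_sum]
    _ = _ := by
        rw [key' (i-j) (b + (l:ℝ) + 1) (c + (l:ℝ)),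
          show (c + (l:ℝ)) - (b + (l:ℝ) + 1) = c - b - 1 by ring]
        ring

lemma aux_perj (a b c x : ℝ) (i j : ℕ) (hj : j ≤ i) :
    ∑ l ∈ range (j + 1), ∑ s ∈ range (i - l - (j-l) + 1),
        poch a (l+s) * poch (c + ((l+s : ℕ) : ℝ)) (i - l - s)
          * ((-1:ℝ)^(j-l) * poch (-a - i + ((j-l : ℕ) : ℝ) + 1) (i - l - s - (j-l))
                / (i - l - s - (j-l)).factorial
              * (-x)^(j-l) / (j-l).factorial)
          * ((-1:ℝ)^l * poch (b + l + 1) ((l+s) - l) / ((l+s) - l).factorial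
              * x^l / l.factorial)
    = (-1:ℝ)^j * gbinom (a - c) j * gbinom (b - c + 1) (i - j) * poch a (i - j) * x^j := by
  calc
    _ = ∑ l ∈ range (j + 1),
          (poch a (i-j) * x^j * ((-1:ℝ)^(i-j) * poch (c - b - 1) (i-j) / (i-j).factorial))
          * ((-1:ℝ)^l * poch (a + ((i-j : ℕ) : ℝ)) l * poch (c + ((i-j : ℕ) : ℝ) + l) (j-l)
              / ((j-l).factorial * l.factorial)) := by
        apply Finset.sum_congr rfl
        intro l hl
        have hl' : l ≤ j := by simpa [Nat.lt_succ_iff] using hl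
        rw [show i - l - (j - l) = i - j from by omega]
        exact aux_inner_sum a b c x i j l hj hl'
    _ = (poch a (i-j) * x^j * ((-1:ℝ)^(i-j) * poch (c - b - 1) (i-j) / (i-j).factorial))
        * ∑ l ∈ range (j + 1),
            (-1:ℝ)^l * poch (a + ((i-j : ℕ) : ℝ)) l * poch ((c + ((i-j : ℕ) : ℝ)) + l) (j-l)
              / ((j-l).factorial * l.factorial) := by
        rw [Finset.mul_sum]
    _ = _ := by
        rw [key'' j (a + ((i-j : ℕ) : ℝ)) (c + ((i-j : ℕ) : ℝ)),
          show (c + ((i-j : ℕ) : ℝ)) - (a + ((i-j : ℕ) : ℝ)) = c - a by ring]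
        rw [gbinom, gbinom]
        have r1 : poch (a - c - (j:ℝ) + 1) j = (-1:ℝ)^j * poch (c - a) j := by
          rw [show a - c - (j:ℝ) + 1 = -(c - a) - (j:ℝ) + 1 by ring]
          exact poch_reverse' _ _
        have r2 : poch (b - c + 1 - ((i - j : ℕ) : ℝ) + 1) (i-j)
            = (-1:ℝ)^(i-j) * poch (c - b - 1) (i-j) := by
          rw [show b - c + 1 - ((i - j : ℕ) : ℝ) + 1 = -(c - b - 1) - ((i - j : ℕ) : ℝ) + 1 by ring]
          exact poch_reverse' _ _
        rw [r1, r2]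
        have hsq : (-1:ℝ)^j * (-1)^j = 1 := by
          rw [← pow_add, ← two_mul, pow_mul]; norm_num
        linear_combination (-(poch a (i-j) * x^j
          * ((-1:ℝ)^(i-j) * poch (c - b - 1) (i-j) / (i-j).factorial)
          * (poch (c - a) j / j.factorial))) * hsq

lemma aux_core (a b c x : ℝ) (i : ℕ) :
    ∑ k ∈ range (i + 1),
        poch a k * poch (c + k) (i - k) * Lag (i - k) (-a - i) (-x) * Lag k b x
    = ∑ j ∈ range (i + 1),
        (-1 : ℝ) ^ j * gbinom (a - c) j * gbinom (b - c + 1) (i - j) * poch a (i - j)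
          * x ^ j := by
  calc
    _ = ∑ k ∈ range (i + 1), ∑ l ∈ range (k + 1), ∑ m ∈ range ((i-k) + 1),
          poch a k * poch (c + k) (i - k)
            * ((-1:ℝ)^m * poch (-a - i + m + 1) (i - k - m) / (i - k - m).factorial
                * (-x)^m / m.factorial)
            * ((-1:ℝ)^l * poch (b + l + 1) (k - l) / (k - l).factorial
                * x^l / l.factorial) := by
        apply Finset.sum_congr rfl
        intro k hk
        simp only [Lag, Finset.mul_sum, Finset.sum_mul]
    _ = ∑ l ∈ range (i + 1), ∑ s ∈ range (i - l + 1), ∑ m ∈ range ((i-(l+s)) + 1),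
          poch a (l+s) * poch (c + ((l+s : ℕ) : ℝ)) (i - (l+s))
            * ((-1:ℝ)^m * poch (-a - i + m + 1) (i - (l+s) - m) / (i - (l+s) - m).factorial
                * (-x)^m / m.factorial)
            * ((-1:ℝ)^l * poch (b + l + 1) ((l+s) - l) / ((l+s) - l).factorial
                * x^l / l.factorial) :=
        tri1 i (fun k l => ∑ m ∈ range ((i-k) + 1),
          poch a k * poch (c + (k : ℝ)) (i - k)
            * ((-1:ℝ)^m * poch (-a - i + m + 1) (i - k - m) / (i - k - m).factorial
                * (-x)^m / m.factorial)
            * ((-1:ℝ)^l * poch (b + l + 1) (k - l) / (k - l).factorial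
                * x^l / l.factorial))
    _ = ∑ l ∈ range (i + 1), ∑ m ∈ range ((i - l) + 1), ∑ s ∈ range (i - l - m + 1),
          poch a (l+s) * poch (c + ((l+s : ℕ) : ℝ)) (i - l - s)
            * ((-1:ℝ)^m * poch (-a - i + m + 1) (i - l - s - m) / (i - l - s - m).factorial
                * (-x)^m / m.factorial)
            * ((-1:ℝ)^l * poch (b + l + 1) ((l+s) - l) / ((l+s) - l).factorial
                * x^l / l.factorial) := by
        simp only [Nat.sub_add_eq]
        exact Finset.sum_congr rfl (fun l _ => tri2 (i-l) _)
    _ = ∑ j ∈ range (i + 1), ∑ l ∈ range (j + 1), ∑ s ∈ range (i - l - (j-l) + 1),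
          poch a (l+s) * poch (c + ((l+s : ℕ) : ℝ)) (i - l - s)
            * ((-1:ℝ)^(j-l) * poch (-a - i + ((j-l : ℕ) : ℝ) + 1) (i - l - s - (j-l))
                  / (i - l - s - (j-l)).factorial
                * (-x)^(j-l) / (j-l).factorial)
            * ((-1:ℝ)^l * poch (b + l + 1) ((l+s) - l) / ((l+s) - l).factorial
                * x^l / l.factorial) :=
        tri3 i (fun l m => ∑ s ∈ range (i - l - m + 1),
          poch a (l+s) * poch (c + ((l+s : ℕ) : ℝ)) (i - l - s)
            * ((-1:ℝ)^m * poch (-a - i + (m : ℝ) + 1) (i - l - s - m) / (i - l - s - m).factorial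
                * (-x)^m / m.factorial)
            * ((-1:ℝ)^l * poch (b + l + 1) ((l+s) - l) / ((l+s) - l).factorial
                * x^l / l.factorial))
    _ = _ := by
        apply Finset.sum_congr rfl
        intro j hjr
        have hj : j ≤ i := by simpa [Nat.lt_succ_iff] using hjr
        exact aux_perj a b c x i j hj

theorem F_polynomial_formula (a b c : ℝ) (i : ℕ) (x : ℝ) :
    ∑ k ∈ range (i + 1),
        poch a k / Real.Gamma (c + k) * Lag (i - k) (-a - i) (-x) * Lag k b x
      = 1 / Real.Gamma (c + i) *
        ∑ j ∈ range (i + 1),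
          (-1 : ℝ) ^ j * gbinom (a - c) j * gbinom (b - c + 1) (i - j) * poch a (i - j)
            * x ^ j := by
  rw [← aux_core a b c x i]
  rw [Finset.mul_sum]
  apply Finset.sum_congr rfl
  intro k hk
  have hk' : k ≤ i := by simpa [Nat.lt_succ_iff] using hk
  have g1 : (1:ℝ) / Real.Gamma (c + k) = poch (c + (k:ℝ)) (i-k) / Real.Gamma (c + i) := by
    rw [← poch_div_gamma (c + (k:ℝ)) (i-k),
      show (c + (k:ℝ)) + ((i - k : ℕ) : ℝ) = c + (i:ℝ) from by
        rw [Nat.cast_sub hk']; ring]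
  have expand : poch a k / Real.Gamma (c + k)
      = poch a k * poch (c + (k:ℝ)) (i-k) * (1 / Real.Gamma (c + (i:ℝ))) := by
    rw [div_eq_mul_one_div, g1]
    ring
  rw [expand]
  ring
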